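/- Let π be a group, 𝔸 a normal subgroup of π, and (K_m)_{m≥1} the associated N-series (K_1 = π, K_2 = 𝔸 ⊔ Γ_2π, K_m = [K_{m−1}, K_1] ⊔ [K_{m−2}, K_2] for m ≥ 3). Let m ≥ 1 and let φ be an automorphism of π such that φ(x)x⁻¹ ∈ K_{2m+1} for every x ∈ π. Then φ(x)x⁻¹ ∈ Γ_{m+1}π for every x ∈ π. (This proves the inclusion J^𝔞_{2m}ℳ ⊆ J_mℳ between the alternative Johnson filtration and the Johnson filtration.) -/

import Mathlib

variable {π : Type*} [Group π]

/-- The series `(K_m)` associated to a (normal) subgroup `𝔸 = A` of `π`: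
`K_1 = π`, `K_2 = 𝔸 ⊔ Γ₂π` and `K_m = [K_{m-1}, K_1] ⊔ [K_{m-2}, K_2]` for `m ≥ 3`.
Here `Γ_m π = (⊤ : Subgroup π).lowerCentralSeries (m-1)`.  The value at `0` is a junk value `⊤`. -/
def altK (A : Subgroup π) : ℕ → Subgroup π
  | 0 => ⊤
  | 1 => ⊤
  | 2 => A ⊔ (⊤ : Subgroup π).lowerCentralSeries 1
  | (m + 3) => ⁅altK A (m + 2), altK A 1⁆ ⊔ ⁅altK A (m + 1), altK A 2⁆

lemma altK_le_lcs (A : Subgroup π) : ∀ n : ℕ, altK A (n + 1) ≤ (⊤ : Subgroup π).lowerCentralSeries (n / 2)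
  | 0 => by simp [altK]
  | 1 => by simp [altK]
  | (n + 2) => by
    have h1 := altK_le_lcs A (n + 1)
    have h0 := altK_le_lcs A n
    show altK A (n + 3) ≤ _
    rw [altK]
    have key : (n + 2) / 2 = n / 2 + 1 := by omega
    rw [key]
    apply sup_le
    · calc ⁅altK A (n + 2), altK A 1⁆ ≤ ⁅(⊤ : Subgroup π).lowerCentralSeries ((n+1)/2), (⊤ : Subgroup π)⁆ :=
            Subgroup.commutator_mono h1 le_top
        _ = (⊤ : Subgroup π).lowerCentralSeries ((n+1)/2 + 1) := (Subgroup.lowerCentralSeries_succ _ _).symm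
        _ ≤ (⊤ : Subgroup π).lowerCentralSeries (n/2 + 1) :=
            Subgroup.lowerCentralSeries_antitone _ (by omega)
    · calc ⁅altK A (n + 1), altK A 2⁆ ≤ ⁅(⊤ : Subgroup π).lowerCentralSeries (n/2), (⊤ : Subgroup π)⁆ :=
            Subgroup.commutator_mono h0 le_top
        _ = (⊤ : Subgroup π).lowerCentralSeries (n/2 + 1) := (Subgroup.lowerCentralSeries_succ _ _).symm

/-- If φ is an automorphism of π with φ(x)x⁻¹ ∈ K_{2m+1} for every x, then
φ(x)x⁻¹ ∈ Γ_{m+1}π for every x  (Γ_{m+1}π is (⊤ : Subgroup π).lowerCentralSeries m). -/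
theorem stmt7 (π : Type*) [Group π] (A : Subgroup π) (hA : A.Normal)
    (m : ℕ) (hm : 1 ≤ m) (φ : π ≃* π)
    (hφ : ∀ x : π, φ x * x⁻¹ ∈ altK A (2 * m + 1)) :
    ∀ x : π, φ x * x⁻¹ ∈ (⊤ : Subgroup π).lowerCentralSeries m := by
  intro x
  have := altK_le_lcs A (2 * m) (hφ x)
  simpa [Nat.mul_div_cancel_left m (by norm_num : 0 < 2)] using this
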